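/- arXiv:2510.09334 — 2 statements merged into one kernel-verified Lean document; each statement's English description precedes it below -/
import Mathlib

section
/- Let (V,d) be a finite metric space and S ⊆ V obtained by the greedy farthest-point (Gonzalez) procedure: S_1 = {v_1} arbitrary, and S_{i+1} = S_i ∪ {v} where v maximizes min_{c∈S_i} d(v,c); set S = S_k. Then max_{v∈V} min_{c∈S} d(v,c) ≤ 2 · min_{T⊆V, |T|=k} max_{v∈V} min_{c∈T} d(v,c); i.e., greedy farthest-point clustering is a 2-approximation for the vertex k-center problem. -/
/-- Greedy farthest-point (Gonzalez) clustering is a 2-approximation for the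
vertex `k`-center problem on a finite metric space: if `v 0, …, v (k-1)` are chosen
greedily (each new point maximizes its distance to the previously chosen points),
then the objective of `S = {v 0, …, v (k-1)}` is at most twice the objective of any
`k`-element center set `T`. -/
theorem gonzalez_two_approximation {V : Type*} [Fintype V] [Nonempty V] [MetricSpace V]
    [DecidableEq V]
    (k : ℕ) (hk : 1 ≤ k) (hkcard : k ≤ Fintype.card V)
    (v : ℕ → V)
    (hgreedy : ∀ i, ∀ hi : 0 < i, i < k → ∀ u : V,
      (Finset.range i).inf' (Finset.nonempty_range_iff.mpr (by omega)) (fun j => dist u (v j))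
        ≤ (Finset.range i).inf' (Finset.nonempty_range_iff.mpr (by omega))
            (fun j => dist (v i) (v j))) :
    ∀ T : Finset V, T.card = k → ∀ hT : T.Nonempty,
      Finset.univ.sup' Finset.univ_nonempty
          (fun u => ((Finset.range k).image v).inf'
            ((Finset.nonempty_range_iff.mpr (by omega)).image v) (fun c => dist u c))
        ≤ 2 * Finset.univ.sup' Finset.univ_nonempty (fun u => T.inf' hT (fun c => dist u c)) := by
  intro T hTcard hT
  set R := Finset.univ.sup' Finset.univ_nonempty (fun u => T.inf' hT (fun c => dist u c)) with hRdef
  -- nearest center in T of each point, within R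
  have hnear : ∀ u : V, ∃ c ∈ T, dist u c ≤ R := by
    intro u
    obtain ⟨c, hc, hce⟩ := Finset.exists_mem_eq_inf' hT (fun c => dist u c)
    refine ⟨c, hc, ?_⟩
    have : T.inf' hT (fun c => dist u c) ≤ R :=
      Finset.le_sup' (fun u => T.inf' hT (fun c => dist u c)) (Finset.mem_univ u)
    linarith [hce ▸ this]
  choose cc hccT hccR using hnear
  -- worst point u for the greedy centers
  have hne : (Finset.range k).Nonempty := Finset.nonempty_range_iff.mpr (by omega)
  obtain ⟨u, -, hu⟩ := Finset.exists_mem_eq_sup' (Finset.univ_nonempty (α := V))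
      (fun u => ((Finset.range k).image v).inf'
        ((Finset.nonempty_range_iff.mpr (by omega : k ≠ 0)).image v) (fun c => dist u c))
  rw [hu]
  set G : ℝ := (Finset.range k).inf' hne (fun j => dist u (v j)) with hGdef
  have himg : ((Finset.range k).image v).inf'
      ((Finset.nonempty_range_iff.mpr (by omega : k ≠ 0)).image v) (fun c => dist u c) = G := by
    apply le_antisymm
    · apply Finset.le_inf'
      intro j hj
      exact Finset.inf'_le _ (Finset.mem_image_of_mem v hj)
    · apply Finset.le_inf'
      intro c hc
      obtain ⟨j, hj, rfl⟩ := Finset.mem_image.mp hc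
      exact Finset.inf'_le _ hj
  rw [himg]
  -- key pairwise bounds
  have hkey2 : ∀ i, i < k → G ≤ dist u (v i) := by
    intro i hi
    exact Finset.inf'_le _ (Finset.mem_range.mpr hi)
  have hkey : ∀ i j : ℕ, i < j → j < k → G ≤ dist (v i) (v j) := by
    intro i j hij hjk
    have h0j : 0 < j := Nat.lt_of_le_of_lt (Nat.zero_le i) hij
    have hjne : (Finset.range j).Nonempty := Finset.nonempty_range_iff.mpr (by omega)
    have hgr := hgreedy j h0j hjk u
    have h1 : G ≤ (Finset.range j).inf' hjne (fun l => dist u (v l)) := by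
      apply Finset.le_inf'
      intro b hb
      exact Finset.inf'_le _ (Finset.mem_range.mpr
        (lt_trans (Finset.mem_range.mp hb) hjk))
    have h2 : (Finset.range j).inf' hjne (fun l => dist (v j) (v l)) ≤ dist (v j) (v i) :=
      Finset.inf'_le _ (Finset.mem_range.mpr hij)
    calc G ≤ (Finset.range j).inf' hjne (fun l => dist u (v l)) := h1
      _ ≤ (Finset.range j).inf' hjne (fun l => dist (v j) (v l)) := hgr
      _ ≤ dist (v j) (v i) := h2
      _ = dist (v i) (v j) := dist_comm _ _
  -- the k+1 points
  set w : Fin (k+1) → V := fun i => if h : (i : ℕ) < k then v i else u with hwdef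
  have hdistw : ∀ a b : Fin (k+1), (a : ℕ) < (b : ℕ) → G ≤ dist (w a) (w b) := by
    intro a b hab
    by_cases hb : (b : ℕ) < k
    · have ha : (a : ℕ) < k := lt_trans hab hb
      simp only [hwdef, dif_pos ha, dif_pos hb]
      exact hkey a b hab hb
    · have ha : (a : ℕ) < k := by omega
      simp only [hwdef, dif_pos ha, dif_neg hb]
      rw [dist_comm]
      exact hkey2 a ha
  -- pigeonhole
  have hcard : T.card < (Finset.univ : Finset (Fin (k+1))).card := by
    simp [hTcard]
  obtain ⟨a, -, b, -, hab, heq⟩ :=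
    Finset.exists_ne_map_eq_of_card_lt_of_maps_to hcard
      (f := fun i => cc (w i)) (fun i _ => hccT (w i))
  have hGle : G ≤ 2 * R := by
    have htri : dist (w a) (w b) ≤ dist (w a) (cc (w a)) + dist (w b) (cc (w b)) := by
      calc dist (w a) (w b) ≤ dist (w a) (cc (w a)) + dist (cc (w a)) (w b) :=
            dist_triangle _ _ _
        _ = dist (w a) (cc (w a)) + dist (w b) (cc (w b)) := by rw [heq, dist_comm (cc (w b)) (w b)]
    have h2R : dist (w a) (w b) ≤ 2 * R := by
      have := hccR (w a); have := hccR (w b); linarith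
    rcases lt_or_gt_of_ne (fun h => hab (by exact_mod_cast Fin.ext h)) with h | h
    · exact le_trans (hdistw a b h) h2R
    · exact le_trans (hdistw b a h) (by rwa [dist_comm])
  exact hGle
end

section
/- Let (V,d) be a finite metric space, k ≥ 1, and let v_1, …, v_{k+1} be the points chosen by the greedy farthest-point procedure (each new point maximizes its distance to the previously chosen set). Then the pairwise distances among v_1, …, v_{k+1} are all at least δ := min_{c ∈ {v_1,…,v_k}} d(v_{k+1}, c), and consequently any set T of k centers has some center within whose Voronoi cell lie two of the v_i, forcing max_{v} min_{c∈T} d(v,c) ≥ δ/2. -/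
/-- Let `v 0, …, v k` be the `k+1` points chosen by the greedy farthest-point procedure
and `δ = min_{j<k} dist (v k) (v j)`. Then all pairwise distances among `v 0, …, v k`
are at least `δ`, and any set `T` of `k` centers has objective at least `δ/2`. -/
theorem greedy_points_separated {V : Type*} [Fintype V] [Nonempty V] [MetricSpace V]
    (k : ℕ) (hk : 1 ≤ k) (v : ℕ → V)
    (hgreedy : ∀ i, ∀ hi : 0 < i, i ≤ k → ∀ u : V,
      (Finset.range i).inf' (Finset.nonempty_range_iff.mpr (by omega)) (fun j => dist u (v j))
        ≤ (Finset.range i).inf' (Finset.nonempty_range_iff.mpr (by omega))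
            (fun j => dist (v i) (v j))) :
    (∀ i j, i < j → j ≤ k →
      (Finset.range k).inf' (Finset.nonempty_range_iff.mpr (by omega))
          (fun j' => dist (v k) (v j'))
        ≤ dist (v i) (v j))
    ∧ ∀ T : Finset V, T.card = k → ∀ hT : T.Nonempty,
      (Finset.range k).inf' (Finset.nonempty_range_iff.mpr (by omega))
          (fun j' => dist (v k) (v j')) / 2
        ≤ Finset.univ.sup' Finset.univ_nonempty (fun u => T.inf' hT (fun c => dist u c)) := by
  have hsep : ∀ i j, i < j → j ≤ k →
      (Finset.range k).inf' (Finset.nonempty_range_iff.mpr (by omega))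
          (fun j' => dist (v k) (v j'))
        ≤ dist (v i) (v j) := by
    intro i j hij hjk
    rcases eq_or_lt_of_le hjk with rfl | hjk'
    · rw [dist_comm]
      exact Finset.inf'_le _ (Finset.mem_range.mpr hij)
    · have h0j : 0 < j := Nat.pos_of_ne_zero (by omega)
      have h1 := hgreedy j h0j (le_of_lt hjk') (v k)
      have h2 : (Finset.range k).inf' (Finset.nonempty_range_iff.mpr (by omega))
          (fun j' => dist (v k) (v j'))
          ≤ (Finset.range j).inf' (Finset.nonempty_range_iff.mpr (by omega))
            (fun j' => dist (v k) (v j')) := by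
        apply Finset.le_inf'
        intro b hb
        exact Finset.inf'_le _ (Finset.mem_range.mpr (lt_of_lt_of_le (Finset.mem_range.mp hb) (le_of_lt hjk')))
      have h3 : (Finset.range j).inf' (Finset.nonempty_range_iff.mpr (by omega))
          (fun j' => dist (v j) (v j')) ≤ dist (v j) (v i) :=
        Finset.inf'_le _ (Finset.mem_range.mpr hij)
      rw [dist_comm (v i) (v j)]
      exact le_trans (le_trans h2 h1) h3
  refine ⟨hsep, ?_⟩
  intro T hcard hT
  set δ := (Finset.range k).inf' (Finset.nonempty_range_iff.mpr (by omega))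
      (fun j' => dist (v k) (v j')) with hδ
  -- nearest center
  have hnear : ∀ i : ℕ, ∃ c ∈ T, T.inf' hT (fun c => dist (v i) c) = dist (v i) c :=
    fun i => Finset.exists_mem_eq_inf' hT _
  choose f hfT hfd using hnear
  -- pigeonhole on range (k+1)
  have hmaps : ∀ i ∈ Finset.range (k+1), f i ∈ T := fun i _ => hfT i
  have hlt : T.card < (Finset.range (k+1)).card := by
    simp [hcard]
  obtain ⟨i, hi, j, hj, hne, heq⟩ :=
    Finset.exists_ne_map_eq_of_card_lt_of_maps_to hlt hmaps
  wlog hij : i < j generalizing i j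
  · exact this j hj i hi (Ne.symm hne) heq.symm (by omega)
  have hik : j ≤ k := by simpa using Nat.lt_succ_iff.mp (Finset.mem_range.mp hj)
  have hd : δ ≤ dist (v i) (v j) := hsep i j hij hik
  have htri : dist (v i) (v j) ≤ dist (v i) (f i) + dist (v j) (f j) := by
    rw [heq]
    calc dist (v i) (v j) ≤ dist (v i) (f j) + dist (f j) (v j) := dist_triangle _ _ _
    _ = dist (v i) (f j) + dist (v j) (f j) := by rw [dist_comm (f j)]
  have hobji : T.inf' hT (fun c => dist (v i) c)
      ≤ Finset.univ.sup' Finset.univ_nonempty (fun u => T.inf' hT (fun c => dist u c)) :=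
    Finset.le_sup' (fun u => T.inf' hT (fun c => dist u c)) (Finset.mem_univ (v i))
  have hobjj : T.inf' hT (fun c => dist (v j) c)
      ≤ Finset.univ.sup' Finset.univ_nonempty (fun u => T.inf' hT (fun c => dist u c)) :=
    Finset.le_sup' (fun u => T.inf' hT (fun c => dist u c)) (Finset.mem_univ (v j))
  rw [hfd] at hobji
  rw [hfd] at hobjj
  linarith
end
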